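/- For n with 2·2^m < n ≤ 3·2^m and m ≥ 1, the complexity of the Thue–Morse sequence satisfies p(n) = 4n − 2·2^m − 4, and for 3·2^m < n ≤ 4·2^m with m ≥ 1, p(n) = 2n + 4·2^m − 2. -/

import Mathlib

open Fin.NatCast in
/-- The Thue–Morse sequence: parity of the number of 1s in binary (fixed point of
`0 ↦ 01`, `1 ↦ 10` starting from `0`). -/
def tm (n : ℕ) : Fin 2 := ((Nat.digits 2 n).count 1 : Fin 2)

/-- The set of length-`n` factors of the Thue–Morse sequence. -/
def tmFactors (n : ℕ) : Set (Fin n → Fin 2) :=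
  {u | ∃ i : ℕ, ∀ j : Fin n, tm (i + j) = u j}

/-- The complexity function of the Thue–Morse sequence. -/
noncomputable def tmComplexity (n : ℕ) : ℕ := (tmFactors n).ncard

open Fin.NatCast in
lemma tm_two_mul (k : ℕ) : tm (2 * k) = tm k := by
  rcases Nat.eq_zero_or_pos k with h | h
  · simp [h]
  · unfold tm
    rw [Nat.digits_def' (by norm_num : 1 < 2) (by omega)]
    simp [Nat.mul_div_cancel_left, Nat.mul_mod_right]

open Fin.NatCast in
lemma tm_two_mul_add_one (k : ℕ) : tm (2 * k + 1) = tm k + 1 := by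
  unfold tm
  rw [Nat.digits_def' (by norm_num : 1 < 2) (by omega)]
  have h1 : (2 * k + 1) % 2 = 1 := by omega
  have h2 : (2 * k + 1) / 2 = k := by omega
  rw [h1, h2, List.count_cons_self]
  push_cast
  ring

lemma fin2_add_one_ne (x : Fin 2) : x + 1 ≠ x := by revert x; decide
lemma fin2_ne_iff {x y : Fin 2} : x ≠ y ↔ x = y + 1 := by revert x y; decide
lemma fin2_add_one_add_one (x : Fin 2) : x + 1 + 1 = x := by revert x; decide

lemma tm_even_ne (k : ℕ) : tm (2 * k) ≠ tm (2 * k + 1) := by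
  rw [tm_two_mul, tm_two_mul_add_one]
  exact fun h => fin2_add_one_ne (tm k) h.symm

lemma tm_no_three (k : ℕ) : ¬ (tm k = tm (k + 1) ∧ tm (k + 1) = tm (k + 2)) := by
  rintro ⟨h1, h2⟩
  rcases Nat.even_or_odd k with ⟨c, hc⟩ | ⟨c, hc⟩
  · subst hc
    exact tm_even_ne c (by rw [two_mul]; exact h1)
  · subst hc
    have e1 : 2 * c + 1 + 1 = 2 * (c + 1) := by ring
    have e2 : 2 * c + 1 + 2 = 2 * (c + 1) + 1 := by ring
    rw [e1, e2] at h2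
    exact tm_even_ne (c + 1) h2

/-- occurrence predicate -/
def occ {n : ℕ} (i : ℕ) (u : Fin n → Fin 2) : Prop := ∀ j : Fin n, tm (i + j) = u j

lemma tmFactors_def {n : ℕ} (u : Fin n → Fin 2) : u ∈ tmFactors n ↔ ∃ i, occ i u :=
  Iff.rfl

/-- if two consecutive tm values agree, the position is odd -/
lemma tm_eq_succ_odd {a : ℕ} (h : tm a = tm (a + 1)) : a % 2 = 1 := by
  rcases Nat.even_or_odd a with ⟨c, hc⟩ | ⟨c, hc⟩
  · exfalso; subst hc; exact tm_even_ne c (by rw [two_mul]; exact h)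
  · omega

/-- alternating pattern of length 4 implies even position -/
lemma tm_alt_even {i : ℕ} {x : Fin 2} (h0 : tm i = x) (h1 : tm (i + 1) = x + 1)
    (h3 : tm (i + 3) = x + 1) : i % 2 = 0 := by
  rcases Nat.even_or_odd i with ⟨c, hc⟩ | ⟨c, hc⟩
  · omega
  · exfalso
    have hc' : i = 2 * c + 1 := by omega
    subst hc'
    rw [tm_two_mul_add_one] at h0
    have hA : tm c = x + 1 := by rw [← h0, fin2_add_one_add_one]
    have e1 : 2 * c + 1 + 1 = 2 * (c + 1) := by ring
    rw [e1, tm_two_mul] at h1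
    have e3 : 2 * c + 1 + 3 = 2 * (c + 2) := by ring
    rw [e3, tm_two_mul] at h3
    have e4 : c + 2 = c + 1 + 1 := by ring
    exact tm_no_three c ⟨hA.trans h1.symm, by rw [← e4, h1, h3]⟩

/-- parity lemma: occurrences of a word of length ≥ 4 have constant parity -/
lemma occ_parity {n : ℕ} (hn : 4 ≤ n) {u : Fin n → Fin 2} {i i' : ℕ}
    (h : occ i u) (h' : occ i' u) : i % 2 = i' % 2 := by
  have l0 : (0 : ℕ) < n := by omega
  have l1 : (1 : ℕ) < n := by omega
  have l2 : (2 : ℕ) < n := by omega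
  have l3 : (3 : ℕ) < n := by omega
  set u0 := u ⟨0, l0⟩
  set u1 := u ⟨1, l1⟩
  set u2 := u ⟨2, l2⟩
  set u3 := u ⟨3, l3⟩
  have key : ∀ i'' : ℕ, occ i'' u →
      (u0 = u1 → i'' % 2 = 1) ∧ (u1 = u2 → (i'' + 1) % 2 = 1) ∧
      (u2 = u3 → (i'' + 2) % 2 = 1) ∧
      (u0 ≠ u1 → u1 ≠ u2 → u2 ≠ u3 → i'' % 2 = 0) := by
    intro i'' hO
    have H0 : tm (i'' + 0) = u0 := hO ⟨0, l0⟩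
    have H1 : tm (i'' + 1) = u1 := hO ⟨1, l1⟩
    have H2 : tm (i'' + 2) = u2 := hO ⟨2, l2⟩
    have H3 : tm (i'' + 3) = u3 := hO ⟨3, l3⟩
    rw [Nat.add_zero] at H0
    refine ⟨?_, ?_, ?_, ?_⟩
    · intro he
      have := tm_eq_succ_odd (a := i'') (by rw [H0, H1, he])
      omega
    · intro he
      have := tm_eq_succ_odd (a := i'' + 1) (by rw [H1, show i''+1+1 = i''+2 by ring, H2, he])
      omega
    · intro he
      have := tm_eq_succ_odd (a := i'' + 2) (by rw [H2, show i''+2+1 = i''+3 by ring, H3, he])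
      omega
    · intro ne01 ne12 ne23
      have e1 : u1 = u0 + 1 := (fin2_ne_iff.mp (Ne.symm ne01))
      have e3 : u3 = u2 + 1 := (fin2_ne_iff.mp (Ne.symm ne23))
      have e2 : u2 = u0 := by
        have := fin2_ne_iff.mp (Ne.symm ne12)
        rw [this, e1, fin2_add_one_add_one]
      exact tm_alt_even H0 (by rw [H1, e1]) (by rw [H3, e3, e2])
  have K := key i h
  have K' := key i' h'
  by_cases c01 : u0 = u1
  · have := K.1 c01; have := K'.1 c01; omega
  · by_cases c12 : u1 = u2
    · have := K.2.1 c12; have := K'.2.1 c12; omega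
    · by_cases c23 : u2 = u3
      · have := K.2.2.1 c23; have := K'.2.2.1 c23; omega
      · have := K.2.2.2 c01 c12 c23; have := K'.2.2.2 c01 c12 c23; omega

open Fin.NatCast in
/-- The image of a word under the Thue–Morse substitution, restricted to length N. -/
def Phi (n N : ℕ) (h : N ≤ 2 * n) (v : Fin n → Fin 2) : Fin N → Fin 2 :=
  fun j => v ⟨(j : ℕ) / 2, by omega⟩ + (((j : ℕ) % 2 : ℕ) : Fin 2)

open Fin.NatCast in
/-- The image under the substitution, shifted by one, restricted to length N. -/
def Psi (n N : ℕ) (h : N ≤ 2 * n + 1) (v : Fin (n + 1) → Fin 2) : Fin N → Fin 2 :=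
  fun j => v ⟨((j : ℕ) + 1) / 2, by omega⟩ + ((((j : ℕ) + 1) % 2 : ℕ) : Fin 2)

open Fin.NatCast in
lemma Phi_inj {n N : ℕ} (h : N ≤ 2 * n) (h2 : 2 * n ≤ N + 1) :
    Function.Injective (Phi n N h) := by
  intro v w hvw
  funext j
  have hj : ∀ x : Fin n → Fin 2, Phi n N h x ⟨2 * (j : ℕ), by omega⟩ = x j := by
    intro x
    show x ⟨(2 * (j : ℕ)) / 2, _⟩ + (((2 * (j : ℕ)) % 2 : ℕ) : Fin 2) = x j
    have e1 : (2 * (j : ℕ)) / 2 = (j : ℕ) := by omega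
    have e2 : (2 * (j : ℕ)) % 2 = 0 := by omega
    simp only [e1, e2, Nat.cast_zero, add_zero, Fin.eta]
  rw [← hj v, ← hj w, hvw]

open Fin.NatCast in
lemma Psi_inj {n N : ℕ} (h : N ≤ 2 * n + 1) (h1 : 1 ≤ N) (h2 : 2 * n ≤ N) :
    Function.Injective (Psi n N h) := by
  intro v w hvw
  funext j
  rcases Nat.eq_zero_or_pos (j : ℕ) with hj0 | hjp
  · have hj : ∀ x : Fin (n + 1) → Fin 2, Psi n N h x ⟨0, by omega⟩ = x ⟨0, by omega⟩ + 1 := by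
      intro x
      show x ⟨(0 + 1) / 2, _⟩ + (((0 + 1) % 2 : ℕ) : Fin 2) = _
      norm_num
    have hx : v ⟨0, by omega⟩ + 1 = w ⟨0, by omega⟩ + 1 := by
      rw [← hj v, ← hj w, hvw]
    have : j = ⟨0, by omega⟩ := Fin.ext hj0
    rw [this]
    have := congrArg (· + (1 : Fin 2)) hx
    simpa [fin2_add_one_add_one] using this
  · have hj : ∀ x : Fin (n + 1) → Fin 2,
        Psi n N h x ⟨2 * (j : ℕ) - 1, by omega⟩ = x j := by
      intro x
      show x ⟨(2 * (j : ℕ) - 1 + 1) / 2, _⟩ + (((2 * (j : ℕ) - 1 + 1) % 2 : ℕ) : Fin 2) = x j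
      have e1 : (2 * (j : ℕ) - 1 + 1) / 2 = (j : ℕ) := by omega
      have e2 : (2 * (j : ℕ) - 1 + 1) % 2 = 0 := by omega
      simp only [e1, e2, Nat.cast_zero, add_zero, Fin.eta]
    rw [← hj v, ← hj w, hvw]

open Fin.NatCast in
lemma Phi_occ {n N : ℕ} (h : N ≤ 2 * n) {v : Fin n → Fin 2} {k : ℕ} (hv : occ k v) :
    occ (2 * k) (Phi n N h v) := by
  intro j
  show tm (2 * k + (j : ℕ)) = v ⟨(j : ℕ) / 2, by omega⟩ + (((j : ℕ) % 2 : ℕ) : Fin 2)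
  rcases Nat.even_or_odd (j : ℕ) with ⟨a, ha⟩ | ⟨a, ha⟩
  · have e : 2 * k + (j : ℕ) = 2 * (k + a) := by omega
    rw [e, tm_two_mul]
    have e1 : (j : ℕ) / 2 = a := by omega
    have e2 : (j : ℕ) % 2 = 0 := by omega
    simp only [e1, e2, Nat.cast_zero, add_zero]
    have := hv ⟨a, by omega⟩
    simpa using this
  · have e : 2 * k + (j : ℕ) = 2 * (k + a) + 1 := by omega
    rw [e, tm_two_mul_add_one]
    have e1 : (j : ℕ) / 2 = a := by omega
    have e2 : (j : ℕ) % 2 = 1 := by omega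
    simp only [e1, e2, Nat.cast_one]
    have := hv ⟨a, by omega⟩
    simp at this
    rw [this]

open Fin.NatCast in
lemma Psi_occ {n N : ℕ} (h : N ≤ 2 * n + 1) {v : Fin (n + 1) → Fin 2} {k : ℕ}
    (hv : occ k v) : occ (2 * k + 1) (Psi n N h v) := by
  intro j
  show tm (2 * k + 1 + (j : ℕ)) =
    v ⟨((j : ℕ) + 1) / 2, by omega⟩ + ((((j : ℕ) + 1) % 2 : ℕ) : Fin 2)
  rcases Nat.even_or_odd (j : ℕ) with ⟨a, ha⟩ | ⟨a, ha⟩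
  · have e : 2 * k + 1 + (j : ℕ) = 2 * (k + a) + 1 := by omega
    rw [e, tm_two_mul_add_one]
    have e1 : ((j : ℕ) + 1) / 2 = a := by omega
    have e2 : ((j : ℕ) + 1) % 2 = 1 := by omega
    simp only [e1, e2, Nat.cast_one]
    have := hv ⟨a, by omega⟩
    simp at this
    rw [this]
  · have e : 2 * k + 1 + (j : ℕ) = 2 * (k + a + 1) := by omega
    rw [e, tm_two_mul]
    have e1 : ((j : ℕ) + 1) / 2 = a + 1 := by omega
    have e2 : ((j : ℕ) + 1) % 2 = 0 := by omega
    simp only [e1, e2, Nat.cast_zero, add_zero]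
    have := hv ⟨a + 1, by omega⟩
    simpa [← add_assoc] using this

lemma occ_unique {n : ℕ} {u u' : Fin n → Fin 2} {i : ℕ} (h : occ i u) (h' : occ i u') :
    u = u' := by
  funext j; rw [← h j, ← h' j]

lemma occ_even_mem_Phi {n N : ℕ} (h : N ≤ 2 * n) {u : Fin N → Fin 2} {k : ℕ}
    (hu : occ (2 * k) u) : u ∈ Phi n N h '' tmFactors n := by
  refine ⟨fun l => tm (k + (l : ℕ)), ⟨k, fun l => rfl⟩, ?_⟩
  exact occ_unique (Phi_occ h (fun l => rfl)) hu

lemma occ_odd_mem_Psi {n N : ℕ} (h : N ≤ 2 * n + 1) {u : Fin N → Fin 2} {k : ℕ}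
    (hu : occ (2 * k + 1) u) : u ∈ Psi n N h '' tmFactors (n + 1) := by
  refine ⟨fun l => tm (k + (l : ℕ)), ⟨k, fun l => rfl⟩, ?_⟩
  exact occ_unique (Psi_occ h (fun l => rfl)) hu

lemma fact_even (n : ℕ) :
    tmFactors (2 * n) =
      Phi n (2 * n) le_rfl '' tmFactors n ∪
      Psi n (2 * n) (by omega) '' tmFactors (n + 1) := by
  ext u
  constructor
  · rintro ⟨i, hi⟩
    rcases Nat.even_or_odd i with ⟨k, hk⟩ | ⟨k, hk⟩
    · left
      exact occ_even_mem_Phi le_rfl (show occ (2 * k) u by rw [show 2 * k = i by omega]; exact hi)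
    · right
      exact occ_odd_mem_Psi (by omega)
        (show occ (2 * k + 1) u by rw [show 2 * k + 1 = i by omega]; exact hi)
  · rintro (⟨v, ⟨k, hk⟩, rfl⟩ | ⟨v, ⟨k, hk⟩, rfl⟩)
    · exact ⟨2 * k, Phi_occ le_rfl hk⟩
    · exact ⟨2 * k + 1, Psi_occ (by omega) hk⟩

lemma fact_odd (n : ℕ) :
    tmFactors (2 * n + 1) =
      Phi (n + 1) (2 * n + 1) (by omega) '' tmFactors (n + 1) ∪
      Psi n (2 * n + 1) (by omega) '' tmFactors (n + 1) := by
  ext u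
  constructor
  · rintro ⟨i, hi⟩
    rcases Nat.even_or_odd i with ⟨k, hk⟩ | ⟨k, hk⟩
    · left
      exact occ_even_mem_Phi (by omega)
        (show occ (2 * k) u by rw [show 2 * k = i by omega]; exact hi)
    · right
      exact occ_odd_mem_Psi (by omega)
        (show occ (2 * k + 1) u by rw [show 2 * k + 1 = i by omega]; exact hi)
  · rintro (⟨v, ⟨k, hk⟩, rfl⟩ | ⟨v, ⟨k, hk⟩, rfl⟩)
    · exact ⟨2 * k, Phi_occ (by omega) hk⟩
    · exact ⟨2 * k + 1, Psi_occ (by omega) hk⟩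

lemma images_disjoint {n n' N : ℕ} (hN : 4 ≤ N) (h : N ≤ 2 * n) (h' : N ≤ 2 * n' + 1) :
    Disjoint (Phi n N h '' tmFactors n) (Psi n' N h' '' tmFactors (n' + 1)) := by
  rw [Set.disjoint_left]
  rintro u ⟨v, ⟨k, hk⟩, rfl⟩ ⟨w, ⟨k', hk'⟩, he⟩
  have o1 : occ (2 * k) (Phi n N h v) := Phi_occ h hk
  have o2 : occ (2 * k' + 1) (Phi n N h v) := by rw [← he] at *; exact Psi_occ h' hk'
  have := occ_parity hN o1 o2
  omega

lemma pA (n : ℕ) (hn : 2 ≤ n) :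
    tmComplexity (2 * n) = tmComplexity n + tmComplexity (n + 1) := by
  unfold tmComplexity
  rw [fact_even n,
    Set.ncard_union_eq (images_disjoint (by omega) le_rfl (by omega))
      (Set.toFinite _) (Set.toFinite _),
    Set.ncard_image_of_injective _ (Phi_inj le_rfl (by omega)),
    Set.ncard_image_of_injective _ (Psi_inj (by omega) (by omega) (by omega))]

lemma pB (n : ℕ) (hn : 2 ≤ n) :
    tmComplexity (2 * n + 1) = 2 * tmComplexity (n + 1) := by
  unfold tmComplexity
  rw [fact_odd n,
    Set.ncard_union_eq (images_disjoint (by omega) (by omega) (by omega))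
      (Set.toFinite _) (Set.toFinite _),
    Set.ncard_image_of_injective _ (Phi_inj (by omega) (by omega)),
    Set.ncard_image_of_injective _ (Psi_inj (by omega) (by omega) (by omega))]
  ring

open Fin.NatCast in
lemma tm0 : tm 0 = 0 := by simp [tm]
lemma fin2_oao : (1:Fin 2)+1 = 0 := rfl
lemma fin2_zao : (0:Fin 2)+1 = 1 := rfl
lemma tm1 : tm 1 = 1 := by simpa [tm0, fin2_zao] using tm_two_mul_add_one 0
lemma tm2 : tm 2 = 1 := by simpa [tm1] using tm_two_mul 1
lemma tm3 : tm 3 = 0 := by simpa [tm1, fin2_oao] using tm_two_mul_add_one 1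
lemma tm4 : tm 4 = 1 := by simpa [tm2] using tm_two_mul 2
lemma tm5 : tm 5 = 0 := by simpa [tm2, fin2_oao] using tm_two_mul_add_one 2
lemma tm6 : tm 6 = 0 := by simpa [tm3] using tm_two_mul 3
lemma tm7 : tm 7 = 1 := by simpa [tm3, fin2_zao] using tm_two_mul_add_one 3

lemma fin2_cases (x : Fin 2) : x = 0 ∨ x = 1 := by omega

lemma p2 : tmComplexity 2 = 4 := by
  have huniv : tmFactors 2 = Set.univ := by
    ext u
    simp only [Set.mem_univ, iff_true]
    rcases fin2_cases (u 0) with h0 | h0 <;> rcases fin2_cases (u 1) with h1 | h1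
    · exact ⟨5, by intro j; fin_cases j <;> simp [tm5, tm6, h0, h1]⟩
    · exact ⟨0, by intro j; fin_cases j <;> simp [tm0, tm1, h0, h1]⟩
    · exact ⟨2, by intro j; fin_cases j <;> simp [tm2, tm3, h0, h1]⟩
    · exact ⟨1, by intro j; fin_cases j <;> simp [tm1, tm2, h0, h1]⟩
  unfold tmComplexity
  rw [huniv, Set.ncard_univ, Nat.card_eq_fintype_card]
  decide

lemma p3 : tmComplexity 3 = 6 := by
  have hset : tmFactors 3 = ↑(Finset.univ.filter
      fun u : Fin 3 → Fin 2 => ¬(u 0 = u 1 ∧ u 1 = u 2)) := by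
    ext u
    simp only [Finset.coe_filter, Finset.mem_univ, true_and, Set.mem_setOf_eq]
    constructor
    · rintro ⟨i, hi⟩ ⟨e1, e2⟩
      have H0 : tm (i + 0) = u 0 := hi 0
      have H1 : tm (i + 1) = u 1 := hi 1
      have H2 : tm (i + 2) = u 2 := hi 2
      rw [Nat.add_zero] at H0
      exact tm_no_three i ⟨by rw [H0, H1, e1], by rw [H1, H2, e2]⟩
    · intro hne
      rcases fin2_cases (u 0) with h0 | h0 <;> rcases fin2_cases (u 1) with h1 | h1 <;>
        rcases fin2_cases (u 2) with h2 | h2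
      · exact absurd ⟨h0.trans h1.symm, h1.trans h2.symm⟩ hne
      · exact ⟨5, by intro j; fin_cases j <;> simp [tm5, tm6, tm7, h0, h1, h2]⟩
      · exact ⟨3, by intro j; fin_cases j <;> simp [tm3, tm4, tm5, h0, h1, h2]⟩
      · exact ⟨0, by intro j; fin_cases j <;> simp [tm0, tm1, tm2, h0, h1, h2]⟩
      · exact ⟨4, by intro j; fin_cases j <;> simp [tm4, tm5, tm6, h0, h1, h2]⟩
      · exact ⟨2, by intro j; fin_cases j <;> simp [tm2, tm3, tm4, h0, h1, h2]⟩
      · exact ⟨1, by intro j; fin_cases j <;> simp [tm1, tm2, tm3, h0, h1, h2]⟩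
      · exact absurd ⟨h0.trans h1.symm, h1.trans h2.symm⟩ hne
  unfold tmComplexity
  rw [hset, Set.ncard_coe_finset]
  decide

lemma p4 : tmComplexity 4 = 10 := by
  have h := pA 2 le_rfl; rw [p2, p3] at h; simpa using h
lemma p5 : tmComplexity 5 = 12 := by
  have h := pB 2 le_rfl; rw [p3] at h; simpa using h
lemma p6 : tmComplexity 6 = 16 := by
  have h := pA 3 (by norm_num); rw [p3, p4] at h; simpa using h
lemma p7 : tmComplexity 7 = 20 := by
  have h := pB 3 (by norm_num); rw [p4] at h; simpa using h
lemma p8 : tmComplexity 8 = 22 := by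
  have h := pA 4 (by norm_num); rw [p4, p5] at h; simpa using h

lemma key (m : ℕ) : 1 ≤ m →
    (∀ n : ℕ, 2 * 2 ^ m < n → n ≤ 3 * 2 ^ m →
      tmComplexity n = 4 * n - 2 * 2 ^ m - 4) ∧
    (∀ n : ℕ, 3 * 2 ^ m < n → n ≤ 4 * 2 ^ m →
      tmComplexity n = 2 * n + 4 * 2 ^ m - 2) := by
  induction m with
  | zero => intro h; exact absurd h (by omega)
  | succ m ih =>
    intro _
    rcases Nat.eq_zero_or_pos m with rfl | hm'
    · constructor
      · intro n h1 h2
        norm_num at h1 h2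
        interval_cases n
        · rw [p5]; norm_num
        · rw [p6]; norm_num
      · intro n h1 h2
        norm_num at h1 h2
        interval_cases n
        · rw [p7]; norm_num
        · rw [p8]; norm_num
    · obtain ⟨IH1, IH2⟩ := ih hm'
      have hX : 2 ≤ 2 ^ m := by
        calc 2 = 2 ^ 1 := rfl
        _ ≤ 2 ^ m := Nat.pow_le_pow_right (by norm_num) hm'
      have hpow : 2 ^ (m + 1) = 2 * 2 ^ m := by rw [pow_succ]; ring
      have C1 : ∀ n : ℕ, 2 * 2 ^ (m + 1) < n → n ≤ 3 * 2 ^ (m + 1) →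
          tmComplexity n = 4 * n - 2 * 2 ^ (m + 1) - 4 := by
        intro n h1 h2
        rw [hpow] at h1 h2 ⊢
        rcases Nat.even_or_odd n with ⟨q, hq⟩ | ⟨q, hq⟩
        · have hq' : n = 2 * q := by omega
          subst hq'
          rw [pA q (by omega)]
          rcases le_or_gt (q + 1) (3 * 2 ^ m) with hle | hlt
          · rw [IH1 q (by omega) (by omega), IH1 (q + 1) (by omega) hle]
            omega
          · rw [IH1 q (by omega) (by omega), IH2 (q + 1) (by omega) (by omega)]
            omega
        · have hq' : n = 2 * q + 1 := by omega
          subst hq'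
          rw [pB q (by omega), IH1 (q + 1) (by omega) (by omega)]
          omega
      refine ⟨C1, ?_⟩
      intro n h1 h2
      rw [hpow] at h1 h2 ⊢
      rcases Nat.even_or_odd n with ⟨q, hq⟩ | ⟨q, hq⟩
      · have hq' : n = 2 * q := by omega
        subst hq'
        rw [pA q (by omega)]
        rcases le_or_gt (q + 1) (4 * 2 ^ m) with hle | hlt
        · rw [IH2 q (by omega) (by omega), IH2 (q + 1) (by omega) hle]
          omega
        · have hC := C1 (q + 1) (by rw [hpow]; omega) (by rw [hpow]; omega)
          rw [hpow] at hC
          rw [IH2 q (by omega) (by omega), hC]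
          omega
      · have hq' : n = 2 * q + 1 := by omega
        subst hq'
        rw [pB q (by omega), IH2 (q + 1) (by omega) (by omega)]
        omega


/-- The Thue–Morse complexity function: for `m ≥ 1`,
`p(n) = 4n − 2·2^m − 4` when `2·2^m < n ≤ 3·2^m`, and
`p(n) = 2n + 4·2^m − 2` when `3·2^m < n ≤ 4·2^m`. -/
theorem tm_complexity_formula (m : ℕ) (hm : 1 ≤ m) :
    (∀ n : ℕ, 2 * 2 ^ m < n → n ≤ 3 * 2 ^ m →
      tmComplexity n = 4 * n - 2 * 2 ^ m - 4) ∧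
    (∀ n : ℕ, 3 * 2 ^ m < n → n ≤ 4 * 2 ^ m →
      tmComplexity n = 2 * n + 4 * 2 ^ m - 2) := key m hm
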